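/- Let G be a finite group acting unitarily on ℂ^d. For any density matrix ρ, the relative entropy of asymmetry Γ(ρ) := S(𝒢(ρ)) - S(ρ) satisfies the variational characterization Γ(ρ) = inf over G-invariant density matrices ω of S(ρ ‖ ω). -/

import Mathlib

open Matrix
open scoped Kronecker ComplexOrder
open scoped Classical

variable {n : Type*} [Fintype n] [DecidableEq n]

/-- Density matrix predicate -/
def IsDensityMatrix (ρ : Matrix n n ℂ) : Prop := ρ.PosSemidef ∧ ρ.trace = 1

/-- von Neumann entropy, base 2 -/
noncomputable def vnEntropy (A : Matrix n n ℂ) : ℝ :=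
  if h : A.IsHermitian then -∑ i, h.eigenvalues i * Real.logb 2 (h.eigenvalues i) else 0

/-- twirl over a finite group -/
noncomputable def twirl {G : Type*} [Group G] [Fintype G]
    (U : G →* Matrix.unitaryGroup n ℂ) (ρ : Matrix n n ℂ) : Matrix n n ℂ :=
  (Fintype.card G : ℂ)⁻¹ • ∑ g : G, (U g : Matrix n n ℂ) * ρ * star (U g : Matrix n n ℂ)

/-- relative entropy of asymmetry -/
noncomputable def relEntAsym {G : Type*} [Group G] [Fintype G]
    (U : G →* Matrix.unitaryGroup n ℂ) (ρ : Matrix n n ℂ) : ℝ :=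
  vnEntropy (twirl U ρ) - vnEntropy ρ

/-- `Matrix.PosSemidef.sqrt` as defined in the older Mathlib (removed since) -/
noncomputable def posSemidefSqrt {A : Matrix n n ℂ} (hA : A.PosSemidef) : Matrix n n ℂ :=
  (hA.1.eigenvectorUnitary : Matrix n n ℂ) *
    diagonal (((↑) : ℝ → ℂ) ∘ Real.sqrt ∘ hA.1.eigenvalues) *
    (star hA.1.eigenvectorUnitary : Matrix n n ℂ)

/-- square root of a PSD matrix (0 otherwise) -/
noncomputable def sqrtPSD (A : Matrix n n ℂ) : Matrix n n ℂ :=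
  if h : A.PosSemidef then posSemidefSqrt h else 0

/-- trace norm -/
noncomputable def traceNorm (A : Matrix n n ℂ) : ℝ :=
  ((posSemidefSqrt (Matrix.posSemidef_conjTranspose_mul_self A)).trace).re

/-- fidelity F(ρ,σ) = ‖√ρ√σ‖₁ -/
noncomputable def fidelity (ρ σ : Matrix n n ℂ) : ℝ := traceNorm (sqrtPSD ρ * sqrtPSD σ)

/-- binary entropy, base 2 -/
noncomputable def binEntropy2 (x : ℝ) : ℝ := -x * Real.logb 2 x - (1-x) * Real.logb 2 (1-x)

/-- matrix logarithm (base 2) of a Hermitian matrix -/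
noncomputable def matLogb (A : Matrix n n ℂ) : Matrix n n ℂ :=
  if h : A.IsHermitian then
    (h.eigenvectorUnitary : Matrix n n ℂ) *
      Matrix.diagonal (fun i => (Real.logb 2 (h.eigenvalues i) : ℂ)) *
      star (h.eigenvectorUnitary : Matrix n n ℂ)
  else 0

/-- quantum relative entropy, +∞ if support condition fails -/
noncomputable def relEntropy (ρ σ : Matrix n n ℂ) : EReal :=
  if ∀ v : n → ℂ, σ *ᵥ v = 0 → ρ *ᵥ v = 0 then
    (((ρ * (matLogb ρ - matLogb σ)).trace).re : EReal)
  else ⊤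

/-- complete positivity -/
def IsCompletelyPositive {m : Type*} [Fintype m] [DecidableEq m]
    (Φ : Matrix n n ℂ →ₗ[ℂ] Matrix m m ℂ) : Prop :=
  ∀ (k : ℕ) (M : Matrix (Fin k × n) (Fin k × n) ℂ), M.PosSemidef →
    (Matrix.of fun p q : Fin k × m =>
      (Φ (Matrix.of fun a b => M (p.1, a) (q.1, b))) p.2 q.2).PosSemidef

/-- CPTP map -/
def IsQuantumChannel {m : Type*} [Fintype m] [DecidableEq m]
    (Φ : Matrix n n ℂ →ₗ[ℂ] Matrix m m ℂ) : Prop :=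
  IsCompletelyPositive Φ ∧ ∀ A, (Φ A).trace = A.trace

/-- G-covariance of a map between systems with representations U, V -/
def IsCovariant {m : Type*} [Fintype m] [DecidableEq m] {G : Type*} [Group G]
    (U : G →* Matrix.unitaryGroup n ℂ) (V : G →* Matrix.unitaryGroup m ℂ)
    (Φ : Matrix n n ℂ →ₗ[ℂ] Matrix m m ℂ) : Prop :=
  ∀ g A, Φ ((U g : Matrix n n ℂ) * A * star (U g : Matrix n n ℂ))
    = (V g : Matrix m m ℂ) * Φ A * star (V g : Matrix m m ℂ)

/-! ### Auxiliary lemmas -/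

section Aux

set_option linter.unusedSectionVars false

open Polynomial

/-- pointwise Klein inequality -/
lemma klein_pointwise (p a b : ℝ) (hp : 0 ≤ p) (ha : 0 ≤ a) (hb : 0 ≤ b)
    (hz : b = 0 → p * a = 0) :
    p * (a - b) / Real.log 2 ≤ p * (a * Real.logb 2 a - a * Real.logb 2 b) := by
  have hlog2 : (0:ℝ) < Real.log 2 := Real.log_pos (by norm_num)
  rcases eq_or_lt_of_le ha with ha0 | ha0
  · rw [← ha0]
    have h1 : p * (0 - b) / Real.log 2 ≤ 0 := by
      apply div_nonpos_of_nonpos_of_nonneg _ hlog2.le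
      nlinarith
    simpa using h1
  rcases eq_or_lt_of_le hb with hb0 | hb0
  · have hpa : p * a = 0 := hz hb0.symm
    have hp0 : p = 0 := by
      rcases mul_eq_zero.mp hpa with h | h
      · exact h
      · exact absurd h ha0.ne'
    simp [hp0]
  · have key : a - b ≤ a * Real.log a - a * Real.log b := by
      have h1 : Real.log (b / a) ≤ b / a - 1 := Real.log_le_sub_one_of_pos (by positivity)
      rw [Real.log_div hb0.ne' ha0.ne'] at h1
      have h2 := mul_le_mul_of_nonneg_left h1 ha0.le
      have h3 : a * (b / a - 1) = b - a := by field_simp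
      nlinarith
    have hrw : a * Real.logb 2 a - a * Real.logb 2 b
        = (a * Real.log a - a * Real.log b) / Real.log 2 := by
      rw [Real.logb, Real.logb]; field_simp
    rw [hrw, mul_div_assoc]
    gcongr

/-- summed Klein inequality over a doubly stochastic kernel -/
lemma klein_sum {ι : Type*} [Fintype ι] (P : ι → ι → ℝ) (lam mu : ι → ℝ)
    (hP : ∀ i j, 0 ≤ P i j) (hrow : ∀ i, ∑ j, P i j = 1) (hcol : ∀ j, ∑ i, P i j = 1)
    (hlam : ∀ i, 0 ≤ lam i) (hmu : ∀ j, 0 ≤ mu j)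
    (hsuml : ∑ i, lam i = 1) (hsumm : ∑ j, mu j = 1)
    (hsupp : ∀ i j, mu j = 0 → P i j * lam i = 0) :
    ∑ j, (∑ i, P i j * lam i) * Real.logb 2 (mu j) ≤ ∑ i, lam i * Real.logb 2 (lam i) := by
  have e1 : ∑ i, ∑ j, P i j * lam i = 1 := by
    have h : ∀ i ∈ Finset.univ, ∑ j, P i j * lam i = lam i := by
      intro i _; rw [← Finset.sum_mul, hrow, one_mul]
    rw [Finset.sum_congr rfl h]; exact hsuml
  have e2 : ∑ i, ∑ j, P i j * mu j = 1 := by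
    rw [Finset.sum_comm]
    have h : ∀ j ∈ Finset.univ, ∑ i, P i j * mu j = mu j := by
      intro j _; rw [← Finset.sum_mul, hcol, one_mul]
    rw [Finset.sum_congr rfl h]; exact hsumm
  have S1 : ∑ i, ∑ j, (P i j * lam i - P i j * mu j) = 0 := by
    simp only [Finset.sum_sub_distrib]
    rw [e1, e2, sub_self]
  have h0 : ∑ i, ∑ j, P i j * (lam i - mu j) / Real.log 2 = 0 := by
    simp only [mul_sub, div_eq_mul_inv]
    simp only [← Finset.sum_mul]
    rw [show ∑ i, ∑ j, (P i j * lam i - P i j * mu j) = 0 from S1, zero_mul]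
  have hle : (0:ℝ) ≤ ∑ i, ∑ j,
      P i j * (lam i * Real.logb 2 (lam i) - lam i * Real.logb 2 (mu j)) := by
    rw [← h0]
    exact Finset.sum_le_sum fun i _ => Finset.sum_le_sum fun j _ =>
      klein_pointwise (P i j) (lam i) (mu j) (hP i j) (hlam i) (hmu j) (hsupp i j)
  have expand : ∑ i, ∑ j, P i j * (lam i * Real.logb 2 (lam i) - lam i * Real.logb 2 (mu j))
      = (∑ i, lam i * Real.logb 2 (lam i))
        - ∑ j, (∑ i, P i j * lam i) * Real.logb 2 (mu j) := by
    simp only [mul_sub, Finset.sum_sub_distrib]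
    congr 1
    · refine Finset.sum_congr rfl fun i _ => ?_
      rw [← Finset.sum_mul, hrow, one_mul]
    · rw [Finset.sum_comm]
      refine Finset.sum_congr rfl fun j _ => ?_
      rw [Finset.sum_mul]
      exact Finset.sum_congr rfl fun i _ => by ring
  linarith

lemma trace_mul_conj_diag (A : Matrix n n ℂ) (W : Matrix n n ℂ) (c : n → ℂ) :
    (A * (W * Matrix.diagonal c * star W)).trace
      = ∑ j, c j * (star W * A * W) j j := by
  rw [show A * (W * Matrix.diagonal c * star W) = (A * W) * Matrix.diagonal c * star W by
    simp only [mul_assoc], Matrix.trace_mul_cycle]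
  rw [show star W * (A * W) * Matrix.diagonal c = (star W * A * W) * Matrix.diagonal c by
    simp only [mul_assoc]]
  simp [Matrix.trace, Matrix.mul_apply, Matrix.diagonal, mul_comm]

lemma conj_diag_entry_eq (A W : Matrix n n ℂ) (j : n) :
    (star W * A * W) j j = star (fun i => W i j) ⬝ᵥ (A *ᵥ fun i => W i j) := by
  simp [Matrix.mul_apply, dotProduct, Matrix.mulVec, Matrix.conjTranspose_apply,
    Finset.mul_sum, Finset.sum_mul]
  rw [Finset.sum_comm]
  exact Finset.sum_congr rfl fun y _ => Finset.sum_congr rfl fun x _ => by ring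

lemma psd_conj_diag_nonneg {A : Matrix n n ℂ} (hA : A.PosSemidef) (W : Matrix n n ℂ) (j : n) :
    0 ≤ (star W * A * W) j j := by
  rw [conj_diag_entry_eq]
  exact hA.dotProduct_mulVec_nonneg _

lemma unitary_conj_pow (W B : Matrix n n ℂ) (hW : W ∈ Matrix.unitaryGroup n ℂ) (k : ℕ) :
    (W * B * star W) ^ k = W * B ^ k * star W := by
  have h1 : star W * W = 1 := Matrix.mem_unitaryGroup_iff'.mp hW
  have h2 : W * star W = 1 := Matrix.mem_unitaryGroup_iff.mp hW
  induction k with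
  | zero => simpa using h2.symm
  | succ m ih =>
    rw [pow_succ, ih]
    calc W * B ^ m * star W * (W * B * star W)
        = W * B ^ m * (star W * W) * (B * star W) := by simp only [mul_assoc]
      _ = W * B ^ (m+1) * star W := by rw [h1, mul_one, pow_succ]; simp only [mul_assoc]

lemma aeval_unitary_conj (W B : Matrix n n ℂ) (hW : W ∈ Matrix.unitaryGroup n ℂ) (p : ℂ[X]) :
    aeval (W * B * star W) p = W * aeval B p * star W := by
  induction p using Polynomial.induction_on' with
  | add f g hf hg => rw [map_add, map_add, hf, hg, Matrix.mul_add, Matrix.add_mul]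
  | monomial k c =>
    rw [aeval_monomial, aeval_monomial, unitary_conj_pow W B hW k]
    simp only [Algebra.algebraMap_eq_smul_one, Matrix.smul_mul, Matrix.mul_smul, one_mul,
      mul_assoc]

lemma aeval_diagonal' (d : n → ℂ) (p : ℂ[X]) :
    aeval (Matrix.diagonal d) p = Matrix.diagonal (fun i => p.eval (d i)) := by
  induction p using Polynomial.induction_on' with
  | add f g hf hg =>
    rw [map_add, hf, hg]
    ext i j
    by_cases h : i = j <;> simp [Matrix.diagonal, h]
  | monomial k c =>
    rw [aeval_monomial, Matrix.diagonal_pow, Algebra.algebraMap_eq_smul_one,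
      Matrix.smul_mul, one_mul]
    ext i j
    by_cases h : i = j <;> simp [Matrix.diagonal, h, eval_monomial]

lemma matLogb_eq_aeval {A : Matrix n n ℂ} (hA : A.IsHermitian) :
    ∃ p : ℂ[X], matLogb A = aeval A p := by
  set s : Finset ℂ := Finset.univ.image (fun i => (hA.eigenvalues i : ℂ)) with hs
  set r : ℂ → ℂ := fun z => (Real.logb 2 z.re : ℂ) with hr
  refine ⟨Lagrange.interpolate s id r, ?_⟩
  have heval : ∀ i, (Lagrange.interpolate s id r).eval ((hA.eigenvalues i : ℂ)) =
      (Real.logb 2 (hA.eigenvalues i) : ℂ) := by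
    intro i
    have hmem : ((hA.eigenvalues i : ℝ) : ℂ) ∈ s := Finset.mem_image_of_mem _ (Finset.mem_univ i)
    have := Lagrange.eval_interpolate_at_node r (Set.injOn_id _) hmem
    simpa [hr] using this
  have hspec := hA.spectral_theorem
  rw [matLogb, dif_pos hA]
  conv_rhs => rw [hspec, Unitary.conjStarAlgAut_apply]
  rw [aeval_unitary_conj _ _ (hA.eigenvectorUnitary).2, aeval_diagonal']
  have hfun : (fun i => (Real.logb 2 (hA.eigenvalues i) : ℂ))
      = fun i => (Lagrange.interpolate s id r).eval (((RCLike.ofReal ∘ hA.eigenvalues) : n → ℂ) i) := by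
    funext i; simpa using (heval i).symm
  rw [hfun]

lemma matLogb_conj_invariant {A W : Matrix n n ℂ} (hA : A.IsHermitian)
    (hW : W ∈ Matrix.unitaryGroup n ℂ) (hinv : W * A * star W = A) :
    W * matLogb A * star W = matLogb A := by
  obtain ⟨p, hp⟩ := matLogb_eq_aeval hA
  rw [hp, ← aeval_unitary_conj _ _ hW, hinv]

/-- trace of a hermitian matrix equals the sum of its eigenvalues -/
lemma trace_eq_sum_eigs {A : Matrix n n ℂ} (hA : A.IsHermitian) :
    A.trace = ∑ i, (hA.eigenvalues i : ℂ) := by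
  conv_lhs => rw [hA.spectral_theorem, Unitary.conjStarAlgAut_apply]
  rw [Matrix.trace_mul_cycle,
    Matrix.mem_unitaryGroup_iff'.mp (hA.eigenvectorUnitary).2, one_mul, Matrix.trace_diagonal]
  simp

lemma trace_mul_matLogb_self {A : Matrix n n ℂ} (hA : A.IsHermitian) :
    (A * matLogb A).trace
      = ∑ i, ((hA.eigenvalues i * Real.logb 2 (hA.eigenvalues i) : ℝ) : ℂ) := by
  rw [matLogb, dif_pos hA, trace_mul_conj_diag]
  have hdiag : star (hA.eigenvectorUnitary : Matrix n n ℂ) * A * (hA.eigenvectorUnitary : Matrix n n ℂ)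
      = Matrix.diagonal (RCLike.ofReal ∘ hA.eigenvalues) := by
    have := hA.conjStarAlgAut_star_eigenvectorUnitary
    rw [Unitary.conjStarAlgAut_apply, Unitary.coe_star, star_star] at this
    exact this
  rw [hdiag]
  refine Finset.sum_congr rfl fun j _ => ?_
  simp [Matrix.diagonal, mul_comm]

lemma re_trace_mul_matLogb (A : Matrix n n ℂ) {B : Matrix n n ℂ} (hB : B.IsHermitian) :
    ((A * matLogb B).trace).re
      = ∑ j, Real.logb 2 (hB.eigenvalues j)
          * ((star (hB.eigenvectorUnitary : Matrix n n ℂ) * A * hB.eigenvectorUnitary) j j).re := by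
  rw [matLogb, dif_pos hB, trace_mul_conj_diag, Complex.re_sum]
  refine Finset.sum_congr rfl fun j _ => ?_
  rw [Complex.re_ofReal_mul]

lemma conj_diag_apply (M : Matrix n n ℂ) (d : n → ℂ) (j : n) :
    (M * Matrix.diagonal d * star M) j j = ∑ i, d i * (Complex.normSq (M j i) : ℂ) := by
  simp [Matrix.mul_apply, Matrix.diagonal, Matrix.conjTranspose_apply, Complex.normSq_eq_conj_mul_self]
  exact Finset.sum_congr rfl fun i _ => by ring

lemma unitary_row_sum_one {M : Matrix n n ℂ} (hM : M ∈ Matrix.unitaryGroup n ℂ) (j : n) :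
    ∑ i, Complex.normSq (M j i) = 1 := by
  have h := Matrix.mem_unitaryGroup_iff.mp hM
  have h1 : (M * star M) j j = 1 := by rw [h]; simp
  have h2 : (M * star M) j j = ∑ i, (Complex.normSq (M j i) : ℂ) := by
    simp [Matrix.mul_apply, Matrix.conjTranspose_apply, Complex.normSq_eq_conj_mul_self]
    exact Finset.sum_congr rfl fun i _ => by ring
  rw [h2] at h1
  exact_mod_cast h1

lemma unitary_col_sum_one {M : Matrix n n ℂ} (hM : M ∈ Matrix.unitaryGroup n ℂ) (i : n) :
    ∑ j, Complex.normSq (M j i) = 1 := by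
  have h := Matrix.mem_unitaryGroup_iff'.mp hM
  have h1 : (star M * M) i i = 1 := by rw [h]; simp
  have h2 : (star M * M) i i = ∑ j, (Complex.normSq (M j i) : ℂ) := by
    simp [Matrix.mul_apply, Matrix.conjTranspose_apply, Complex.normSq_eq_conj_mul_self]
  rw [h2] at h1
  exact_mod_cast h1


lemma klein_matrix {σ ω : Matrix n n ℂ} (hσ : σ.PosSemidef) (hω : ω.PosSemidef)
    (htσ : σ.trace = 1) (htω : ω.trace = 1)
    (hsupp : ∀ v, ω *ᵥ v = 0 → σ *ᵥ v = 0) :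
    ((σ * matLogb ω).trace).re ≤ ((σ * matLogb σ).trace).re := by
  have hσh : σ.IsHermitian := hσ.1
  have hωh : ω.IsHermitian := hω.1
  set V : Matrix n n ℂ := (hσh.eigenvectorUnitary : Matrix n n ℂ) with hV
  set W : Matrix n n ℂ := (hωh.eigenvectorUnitary : Matrix n n ℂ) with hW
  set lam : n → ℝ := hσh.eigenvalues with hlamdef
  set mu : n → ℝ := hωh.eigenvalues with hmudef
  set M : Matrix n n ℂ := star W * V with hM
  set P : n → n → ℝ := fun i j => Complex.normSq (M j i) with hP
  have hMu : M ∈ Matrix.unitaryGroup n ℂ :=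
    mul_mem (Unitary.star_mem hωh.eigenvectorUnitary.2) hσh.eigenvectorUnitary.2
  have hstarM : star M = star V * W := by rw [hM, StarMul.star_mul, star_star]
  have hq : ∀ j, (star W * σ * W) j j = ∑ i, ((lam i : ℂ)) * (Complex.normSq (M j i) : ℂ) := by
    intro j
    have hconj : star W * σ * W
        = M * Matrix.diagonal (RCLike.ofReal ∘ lam) * star M := by
      conv_lhs => rw [hσh.spectral_theorem, Unitary.conjStarAlgAut_apply]
      rw [hM, hstarM]
      simp only [mul_assoc, hV, hlamdef]
    rw [hconj, conj_diag_apply]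
    rfl
  have hqre : ∀ j, ((star W * σ * W) j j).re = ∑ i, P i j * lam i := by
    intro j
    rw [hq j]
    rw [Complex.re_sum]
    refine Finset.sum_congr rfl fun i _ => ?_
    rw [show ((lam i : ℂ)) * (Complex.normSq (M j i) : ℂ)
      = ((lam i * Complex.normSq (M j i) : ℝ) : ℂ) by push_cast; ring]
    rw [Complex.ofReal_re]; exact mul_comm _ _
  have hrow : ∀ i, ∑ j, P i j = 1 := fun i => unitary_col_sum_one hMu i
  have hcol : ∀ j, ∑ i, P i j = 1 := fun j => unitary_row_sum_one hMu j
  have hlam : ∀ i, 0 ≤ lam i := fun i => hσ.eigenvalues_nonneg i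
  have hmu : ∀ j, 0 ≤ mu j := fun j => hω.eigenvalues_nonneg j
  have hsuml : ∑ i, lam i = 1 := by
    have := trace_eq_sum_eigs hσh
    rw [htσ] at this
    exact_mod_cast this.symm
  have hsumm : ∑ j, mu j = 1 := by
    have := trace_eq_sum_eigs hωh
    rw [htω] at this
    exact_mod_cast this.symm
  have hPnn : ∀ i j, 0 ≤ P i j := fun i j => Complex.normSq_nonneg _
  have hsupp' : ∀ i j, mu j = 0 → P i j * lam i = 0 := by
    intro i j hmuj
    have hWspec : ω * W = W * Matrix.diagonal (RCLike.ofReal ∘ mu) := by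
      conv_lhs => rw [hωh.spectral_theorem, Unitary.conjStarAlgAut_apply]
      rw [show (W * Matrix.diagonal (RCLike.ofReal ∘ mu) * star W) * W
          = W * Matrix.diagonal (RCLike.ofReal ∘ mu) * (star W * W) by simp only [mul_assoc]]
      rw [Matrix.mem_unitaryGroup_iff'.mp hωh.eigenvectorUnitary.2, mul_one]
    have hcol0 : ω *ᵥ (fun a => W a j) = 0 := by
      funext a
      have h1 : (ω *ᵥ fun a => W a j) a = (ω * W) a j := by
        simp [Matrix.mulVec, Matrix.mul_apply, dotProduct]
      rw [h1, hWspec]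
      simp [Matrix.mul_apply, Matrix.diagonal]
      exact Or.inr hmuj
    have hσ0 : σ *ᵥ (fun a => W a j) = 0 := hsupp _ hcol0
    have hq0 : (star W * σ * W) j j = 0 := by
      rw [conj_diag_entry_eq, hσ0, dotProduct_zero]
    have hsum0 : ∑ i, P i j * lam i = 0 := by
      have := hqre j
      rw [hq0] at this
      simpa using this.symm
    have := (Finset.sum_eq_zero_iff_of_nonneg
      (fun i _ => mul_nonneg (hPnn i j) (hlam i))).mp hsum0 i (Finset.mem_univ i)
    exact this
  have hklein := klein_sum P lam mu hPnn hrow hcol hlam hmu hsuml hsumm hsupp'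
  have hLHS : ((σ * matLogb ω).trace).re
      = ∑ j, (∑ i, P i j * lam i) * Real.logb 2 (mu j) := by
    rw [re_trace_mul_matLogb σ hωh]
    refine Finset.sum_congr rfl fun j _ => ?_
    rw [hqre j]  -- note W defs coincide
    ring
  have hRHS : ((σ * matLogb σ).trace).re = ∑ i, lam i * Real.logb 2 (lam i) := by
    rw [trace_mul_matLogb_self hσh, Complex.re_sum]
    exact Finset.sum_congr rfl fun i _ => Complex.ofReal_re _
  rw [hLHS, hRHS]
  exact hklein

lemma sum_mulVec' {α : Type*} (s : Finset α) (A : α → Matrix n n ℂ) (v : n → ℂ) :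
    (∑ i ∈ s, A i) *ᵥ v = ∑ i ∈ s, A i *ᵥ v := by
  ext a
  simp only [Matrix.mulVec, dotProduct, Matrix.sum_apply, Finset.sum_mul]
  rw [Finset.sum_comm]
  simp [Matrix.mulVec, dotProduct, Finset.sum_apply]

lemma dotProduct_sum' {α : Type*} (v : n → ℂ) (s : Finset α) (f : α → n → ℂ) :
    v ⬝ᵥ (∑ i ∈ s, f i) = ∑ i ∈ s, v ⬝ᵥ f i := by
  simp only [dotProduct, Finset.sum_apply, Finset.mul_sum]
  rw [Finset.sum_comm]

section Twirl

variable {G : Type*} [Group G] [Fintype G] (U : G →* Matrix.unitaryGroup n ℂ)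

lemma cardG_ne_zero : ((Fintype.card G : ℂ)) ≠ 0 := by
  exact_mod_cast (Nat.cast_ne_zero (R := ℂ)).mpr Fintype.card_ne_zero

lemma twirl_term_posSemidef {ρ : Matrix n n ℂ} (hρ : ρ.PosSemidef) (g : G) :
    ((U g : Matrix n n ℂ) * ρ * star (U g : Matrix n n ℂ)).PosSemidef :=
  hρ.mul_mul_conjTranspose_same _

lemma twirl_posSemidef {ρ : Matrix n n ℂ} (hρ : ρ.PosSemidef) : (twirl U ρ).PosSemidef := by
  rw [twirl]
  have hsum : (∑ g : G, (U g : Matrix n n ℂ) * ρ * star (U g : Matrix n n ℂ)).PosSemidef := by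
    refine Matrix.PosSemidef.of_dotProduct_mulVec_nonneg ?_ ?_
    · show _ = _
      rw [Matrix.conjTranspose_sum]
      exact Finset.sum_congr rfl fun g _ => (twirl_term_posSemidef U hρ g).1
    · intro x
      rw [sum_mulVec', dotProduct_sum']
      exact Finset.sum_nonneg fun g _ => (twirl_term_posSemidef U hρ g).dotProduct_mulVec_nonneg x
  have hcast : ((Fintype.card G : ℂ))⁻¹ = ((((Fintype.card G : ℝ))⁻¹ : ℝ) : ℂ) := by push_cast; ring
  refine Matrix.PosSemidef.of_dotProduct_mulVec_nonneg ?_ ?_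
  · show _ = _
    rw [Matrix.conjTranspose_smul, hsum.1]
    congr 1
    rw [hcast]
    simp
  · intro x
    rw [Matrix.smul_mulVec, dotProduct_smul, smul_eq_mul]
    refine mul_nonneg ?_ (hsum.dotProduct_mulVec_nonneg x)
    rw [hcast]
    exact Complex.zero_le_real.mpr (inv_nonneg.mpr (Nat.cast_nonneg _))

lemma twirl_trace (ρ : Matrix n n ℂ) : (twirl U ρ).trace = ρ.trace := by
  rw [twirl, Matrix.trace_smul, Matrix.trace_sum]
  have h : ∀ g ∈ Finset.univ, ((U g : Matrix n n ℂ) * ρ * star (U g : Matrix n n ℂ)).trace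
      = ρ.trace := by
    intro g _
    rw [Matrix.trace_mul_cycle, Matrix.mem_unitaryGroup_iff'.mp (U g).2, one_mul]
  rw [Finset.sum_congr rfl h, Finset.sum_const, Finset.card_univ, nsmul_eq_mul, smul_eq_mul,
    ← mul_assoc, inv_mul_cancel₀ (cardG_ne_zero (G := G)), one_mul]

lemma twirl_isDensityMatrix {ρ : Matrix n n ℂ} (hρ : IsDensityMatrix ρ) :
    IsDensityMatrix (twirl U ρ) :=
  ⟨twirl_posSemidef U hρ.1, by rw [twirl_trace, hρ.2]⟩

lemma twirl_invariant (ρ : Matrix n n ℂ) (h : G) :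
    (U h : Matrix n n ℂ) * twirl U ρ * star (U h : Matrix n n ℂ) = twirl U ρ := by
  rw [twirl, Matrix.mul_smul, Matrix.smul_mul, Finset.mul_sum, Finset.sum_mul]
  congr 1
  have hterm : ∀ g : G, (U h : Matrix n n ℂ) * ((U g : Matrix n n ℂ) * ρ * star (U g : Matrix n n ℂ))
      * star (U h : Matrix n n ℂ)
      = (U (h * g) : Matrix n n ℂ) * ρ * star (U (h * g) : Matrix n n ℂ) := by
    intro g
    rw [map_mul U]
    show _ = ((U h : Matrix n n ℂ) * (U g : Matrix n n ℂ)) * ρ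
      * star ((U h : Matrix n n ℂ) * (U g : Matrix n n ℂ))
    rw [StarMul.star_mul]
    simp only [mul_assoc]
  calc ∑ g : G, (U h : Matrix n n ℂ) * ((U g : Matrix n n ℂ) * ρ * star (U g : Matrix n n ℂ))
        * star (U h : Matrix n n ℂ)
      = ∑ g : G, (U (h * g) : Matrix n n ℂ) * ρ * star (U (h * g) : Matrix n n ℂ) := by
        exact Finset.sum_congr rfl fun g _ => hterm g
    _ = ∑ g : G, (U g : Matrix n n ℂ) * ρ * star (U g : Matrix n n ℂ) :=
        Fintype.sum_bijective (h * ·) (Group.mulLeft_bijective h) _ _ (fun g => rfl)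

lemma twirl_trace_mul_invariant (ρ L : Matrix n n ℂ)
    (hL : ∀ g : G, (U g : Matrix n n ℂ) * L * star (U g : Matrix n n ℂ) = L) :
    ((twirl U ρ) * L).trace = (ρ * L).trace := by
  rw [twirl, Matrix.smul_mul, Matrix.trace_smul, Finset.sum_mul, Matrix.trace_sum]
  have hterm : ∀ g ∈ Finset.univ,
      ((U g : Matrix n n ℂ) * ρ * star (U g : Matrix n n ℂ) * L).trace = (ρ * L).trace := by
    intro g _
    have hL' : star (U g : Matrix n n ℂ) * L * (U g : Matrix n n ℂ) = L := by
      conv_lhs => rw [← hL g]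
      rw [show star (U g : Matrix n n ℂ) * ((U g : Matrix n n ℂ) * L * star (U g : Matrix n n ℂ))
            * (U g : Matrix n n ℂ)
          = (star (U g : Matrix n n ℂ) * (U g : Matrix n n ℂ)) * L
            * (star (U g : Matrix n n ℂ) * (U g : Matrix n n ℂ)) by simp only [mul_assoc],
        Matrix.mem_unitaryGroup_iff'.mp (U g).2, one_mul, mul_one]
    rw [show (U g : Matrix n n ℂ) * ρ * star (U g : Matrix n n ℂ) * L
        = (U g : Matrix n n ℂ) * (ρ * (star (U g : Matrix n n ℂ) * L)) by simp only [mul_assoc],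
      Matrix.trace_mul_comm]
    rw [show ρ * (star (U g : Matrix n n ℂ) * L) * (U g : Matrix n n ℂ)
        = ρ * (star (U g : Matrix n n ℂ) * L * (U g : Matrix n n ℂ)) by simp only [mul_assoc],
      hL']
  rw [Finset.sum_congr rfl hterm, Finset.sum_const, Finset.card_univ, nsmul_eq_mul, smul_eq_mul,
    ← mul_assoc, inv_mul_cancel₀ (cardG_ne_zero (G := G)), one_mul]

lemma twirl_support {ρ : Matrix n n ℂ} (hρ : ρ.PosSemidef) (v : n → ℂ)
    (hv : twirl U ρ *ᵥ v = 0) : ρ *ᵥ v = 0 := by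
  have hsum : (∑ g : G, (U g : Matrix n n ℂ) * ρ * star (U g : Matrix n n ℂ)) *ᵥ v = 0 := by
    rw [twirl, Matrix.smul_mulVec] at hv
    have := smul_eq_zero.mp hv
    rcases this with h | h
    · exact absurd h (inv_ne_zero (cardG_ne_zero (G := G)))
    · exact h
  have hdot : ∑ g : G, star v ⬝ᵥ (((U g : Matrix n n ℂ) * ρ * star (U g : Matrix n n ℂ)) *ᵥ v)
      = 0 := by
    rw [← dotProduct_sum', ← sum_mulVec', hsum, dotProduct_zero]
  have hzero := (Finset.sum_eq_zero_iff_of_nonneg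
    (fun g _ => (twirl_term_posSemidef U hρ g).dotProduct_mulVec_nonneg v)).mp hdot 1 (Finset.mem_univ 1)
  have h1 : ((U 1 : Matrix n n ℂ) * ρ * star (U 1 : Matrix n n ℂ)) = ρ := by
    rw [map_one U]
    show (1 : Matrix n n ℂ) * ρ * star (1 : Matrix n n ℂ) = ρ
    simp
  rw [h1] at hzero
  exact (hρ.dotProduct_mulVec_zero_iff v).mp hzero

lemma invariant_support_twirl {ρ ω : Matrix n n ℂ}
    (hsupp : ∀ v, ω *ᵥ v = 0 → ρ *ᵥ v = 0)
    (hinv : ∀ g : G, (U g : Matrix n n ℂ) * ω * star (U g : Matrix n n ℂ) = ω)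
    (v : n → ℂ) (hv : ω *ᵥ v = 0) : twirl U ρ *ᵥ v = 0 := by
  have hterm : ∀ g : G, ((U g : Matrix n n ℂ) * ρ * star (U g : Matrix n n ℂ)) *ᵥ v = 0 := by
    intro g
    have hcomm : ω * star (U g : Matrix n n ℂ) = star (U g : Matrix n n ℂ) * ω := by
      have e : star (U g : Matrix n n ℂ) * ω * (U g : Matrix n n ℂ) = ω := by
        conv_lhs => rw [← hinv g]
        rw [show star (U g : Matrix n n ℂ) * ((U g : Matrix n n ℂ) * ω * star (U g : Matrix n n ℂ))
              * (U g : Matrix n n ℂ)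
            = (star (U g : Matrix n n ℂ) * (U g : Matrix n n ℂ)) * ω
              * (star (U g : Matrix n n ℂ) * (U g : Matrix n n ℂ)) by simp only [mul_assoc],
          Matrix.mem_unitaryGroup_iff'.mp (U g).2, one_mul, mul_one]
      conv_lhs => rw [← e]
      rw [show star (U g : Matrix n n ℂ) * ω * (U g : Matrix n n ℂ) * star (U g : Matrix n n ℂ)
          = star (U g : Matrix n n ℂ) * ω * ((U g : Matrix n n ℂ) * star (U g : Matrix n n ℂ)) by
            simp only [mul_assoc],
        Matrix.mem_unitaryGroup_iff.mp (U g).2, mul_one]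
    have hω0 : ω *ᵥ (star (U g : Matrix n n ℂ) *ᵥ v) = 0 := by
      rw [Matrix.mulVec_mulVec, hcomm, ← Matrix.mulVec_mulVec, hv, Matrix.mulVec_zero]
    have hρ0 : ρ *ᵥ (star (U g : Matrix n n ℂ) *ᵥ v) = 0 := hsupp _ hω0
    calc ((U g : Matrix n n ℂ) * ρ * star (U g : Matrix n n ℂ)) *ᵥ v
        = (U g : Matrix n n ℂ) *ᵥ (ρ *ᵥ (star (U g : Matrix n n ℂ) *ᵥ v)) := by
          rw [Matrix.mulVec_mulVec, Matrix.mulVec_mulVec]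
      _ = 0 := by rw [hρ0, Matrix.mulVec_zero]
  rw [twirl, Matrix.smul_mulVec, sum_mulVec']
  rw [Finset.sum_congr rfl fun g _ => hterm g, Finset.sum_const]
  simp

end Twirl

end Aux

theorem relEntAsym_variational {n G : Type*} [Fintype n] [DecidableEq n]
    [Group G] [Fintype G] (U : G →* Matrix.unitaryGroup n ℂ)
    (ρ : Matrix n n ℂ) (hρ : IsDensityMatrix ρ) :
    ((relEntAsym U ρ : ℝ) : EReal)
      = ⨅ ω : {ω : Matrix n n ℂ // IsDensityMatrix ω ∧
          ∀ g : G, (U g : Matrix n n ℂ) * ω * star (U g : Matrix n n ℂ) = ω},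
          relEntropy ρ (ω : Matrix n n ℂ) := by
  have hρH : ρ.IsHermitian := hρ.1.1
  have hτdm : IsDensityMatrix (twirl U ρ) := twirl_isDensityMatrix U hρ
  have hτH : (twirl U ρ).IsHermitian := hτdm.1.1
  have hτinv : ∀ g : G, (U g : Matrix n n ℂ) * twirl U ρ * star (U g : Matrix n n ℂ) = twirl U ρ :=
    fun g => twirl_invariant U ρ g
  have hEnt : ∀ (A : Matrix n n ℂ) (hA : A.IsHermitian),
      vnEntropy A = -((A * matLogb A).trace).re := by
    intro A hA
    rw [vnEntropy, dif_pos hA, trace_mul_matLogb_self hA, Complex.re_sum]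
    simp
  have hGamma : relEntAsym U ρ
      = ((ρ * matLogb ρ).trace).re - ((twirl U ρ * matLogb (twirl U ρ)).trace).re := by
    rw [relEntAsym, hEnt _ hτH, hEnt _ hρH]
    ring
  have hsuppτ : ∀ v : n → ℂ, twirl U ρ *ᵥ v = 0 → ρ *ᵥ v = 0 :=
    fun v hv => twirl_support U hρ.1 v hv
  have hLτinv : ∀ g : G, (U g : Matrix n n ℂ) * matLogb (twirl U ρ) * star (U g : Matrix n n ℂ)
      = matLogb (twirl U ρ) :=
    fun g => matLogb_conj_invariant hτH (U g).2 (hτinv g)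
  have hval : ((ρ * (matLogb ρ - matLogb (twirl U ρ))).trace).re
      = ((ρ * matLogb ρ).trace).re - ((twirl U ρ * matLogb (twirl U ρ)).trace).re := by
    rw [Matrix.mul_sub, Matrix.trace_sub, Complex.sub_re]
    congr 1
    rw [← twirl_trace_mul_invariant U ρ (matLogb (twirl U ρ)) hLτinv]
  have hlb : ∀ ω : Matrix n n ℂ, IsDensityMatrix ω →
      (∀ g : G, (U g : Matrix n n ℂ) * ω * star (U g : Matrix n n ℂ) = ω) →
      (∀ v : n → ℂ, ω *ᵥ v = 0 → ρ *ᵥ v = 0) →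
      relEntAsym U ρ ≤ ((ρ * (matLogb ρ - matLogb ω)).trace).re := by
    intro ω hω hinv hsupp
    rw [Matrix.mul_sub, Matrix.trace_sub, Complex.sub_re, hGamma]
    have hLωinv : ∀ g : G, (U g : Matrix n n ℂ) * matLogb ω * star (U g : Matrix n n ℂ)
        = matLogb ω := fun g => matLogb_conj_invariant hω.1.1 (U g).2 (hinv g)
    have heq : (ρ * matLogb ω).trace = (twirl U ρ * matLogb ω).trace :=
      (twirl_trace_mul_invariant U ρ (matLogb ω) hLωinv).symm
    have hsuppτω : ∀ v, ω *ᵥ v = 0 → twirl U ρ *ᵥ v = 0 :=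
      fun v hv => invariant_support_twirl U hsupp hinv v hv
    have hk := klein_matrix hτdm.1 hω.1 hτdm.2 hω.2 hsuppτω
    have hle : ((ρ * matLogb ω).trace).re ≤ ((twirl U ρ * matLogb (twirl U ρ)).trace).re := by
      rw [heq]; exact hk
    linarith
  apply le_antisymm
  · refine le_iInf fun ω => ?_
    obtain ⟨ω, hω, hinv⟩ := ω
    rw [relEntropy]
    split_ifs with hsupp
    · exact EReal.coe_le_coe_iff.mpr (hlb ω hω hinv hsupp)
    · exact le_top
  · have hrel : relEntropy ρ (twirl U ρ) = ((relEntAsym U ρ : ℝ) : EReal) := by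
      rw [relEntropy, if_pos hsuppτ]
      exact congrArg (fun x : ℝ => (x : EReal)) (hval.trans hGamma.symm)
    exact le_trans (iInf_le _ ⟨twirl U ρ, hτdm, hτinv⟩) (le_of_eq hrel)
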